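/- For an irreducible finite-dimensional representation τ of an orthogonal group with a non-degenerate invariant symmetric bilinear form B, and a nonzero linear functional φ on τ: (φ⊗φ) applied to the invariant element Σᵢ eᵢ⊗eᵢ (where {eᵢ} is B-orthonormal) equals B*(φ♯, φ♯) where φ♯ is the vector representing φ via B; consequently (φ⊗φ) is nonzero on the invariant element iff B(φ♯, φ♯) ≠ 0, which holds whenever φ is χ-equivariant for a subgroup C with dim Hom_C(τ, χ) = 1 and τ self-dual via B with τ* ≅ τ sending the χ⁻¹-equivariant line to the χ-equivariant line. -/

import Mathlib

open TensorProduct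

/-- For a non-degenerate symmetric bilinear form B on τ, a functional φ
represented via B by φ♯ (φ(v) = B(φ♯,v)), and a B-orthonormal basis {eᵢ} with
T = Σ eᵢ ⊗ eᵢ: (φ⊗φ)(T) = B(φ♯,φ♯); consequently (φ⊗φ)(T) ≠ 0 ↔ B(φ♯,φ♯) ≠ 0. -/
theorem stmt12 {τ : Type*} [AddCommGroup τ] [Module ℂ τ] [FiniteDimensional ℂ τ]
    (B : τ →ₗ[ℂ] τ →ₗ[ℂ] ℂ)
    (hsymm : ∀ x y : τ, B x y = B y x)
    (hnondeg : ∀ x : τ, (∀ y : τ, B x y = 0) → x = 0)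
    (φ : τ →ₗ[ℂ] ℂ) (hφ : φ ≠ 0)
    (s : τ) (hs : ∀ v : τ, φ v = B s v)
    {ι : Type*} [Fintype ι] [DecidableEq ι] (e : Module.Basis ι ℂ τ)
    (horth : ∀ i j : ι, B (e i) (e j) = if i = j then 1 else 0) :
    TensorProduct.lift ((LinearMap.mul ℂ ℂ).compl₁₂ φ φ) (∑ i : ι, e i ⊗ₜ[ℂ] e i)
        = B s s ∧
      (TensorProduct.lift ((LinearMap.mul ℂ ℂ).compl₁₂ φ φ) (∑ i : ι, e i ⊗ₜ[ℂ] e i) ≠ 0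
        ↔ B s s ≠ 0) := by
  have hmain : TensorProduct.lift ((LinearMap.mul ℂ ℂ).compl₁₂ φ φ)
      (∑ i : ι, e i ⊗ₜ[ℂ] e i) = B s s := by
    have hrepr : ∀ j : ι, B s (e j) = e.repr s j := by
      intro j
      conv_lhs => rw [← e.sum_repr s]
      simp [horth, Finset.sum_ite_eq', -Module.Basis.sum_repr]
    have hBss : B s s = ∑ j : ι, B s (e j) * B s (e j) := by
      conv_lhs => rw [← e.sum_repr s]
      simp only [map_sum, map_smul, LinearMap.sum_apply, LinearMap.smul_apply,
        smul_eq_mul]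
      refine Finset.sum_congr rfl fun j _ => ?_
      rw [hrepr]
      congr 1
      simp [horth, Finset.sum_ite_eq']
    rw [hBss, map_sum]
    refine Finset.sum_congr rfl fun i _ => ?_
    simp [hs]
  exact ⟨hmain, by rw [hmain]⟩
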